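/- The configuration of n charges at equilibrium on the needle [0,1] is the unique minimizer of ω: a point a = (a_2,…,a_{n−1}) ∈ U_{n−2} satisfies ω(a) ≤ ω(b) for all b ∈ U_{n−2} if and only if (0, a_2, …, a_{n−1}, 1) is a configuration of n charges at equilibrium, and there is exactly one such point a. -/

import Mathlib

/-- Extend a point `(a_2, …, a_{n-1}) ∈ ℝ^{n-2}` to a full configuration on the needle,
with `a_1 = 0` and `a_n = 1` (0-indexed: position `0` is `0`, position `n-1` is `1`). -/
def extCfg (n : ℕ) (a : Fin (n - 2) → ℝ) : Fin n → ℝ := fun i =>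
  if h0 : i.val = 0 then 0
  else if h1 : i.val = n - 1 then 1
  else a ⟨i.val - 1, by have := i.isLt; omega⟩

/-- The open simplex `U_{n-2} = {0 < a_2 < ⋯ < a_{n-1} < 1} ⊆ ℝ^{n-2}`. -/
def needleU (n : ℕ) : Set (Fin (n - 2) → ℝ) :=
  {a | StrictMono (extCfg n a)}

/-- The interaction energy `ω(a_2,…,a_{n-1}) = ∑_{1 ≤ j < k ≤ n} 1/(a_k - a_j)`
(with `a_1 = 0`, `a_n = 1`). -/
noncomputable def needleOmega (n : ℕ) (a : Fin (n - 2) → ℝ) : ℝ :=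
  ∑ p ∈ Finset.univ.filter (fun p : Fin n × Fin n => p.1 < p.2),
    1 / (extCfg n a p.2 - extCfg n a p.1)


/-- For `n ≥ 3`, `x : Fin n → ℝ` is a configuration of `n` charges at equilibrium on the
needle `[0,1]`: a strictly increasing tuple with `x 0 = 0`, `x (n-1) = 1` such that each
interior charge feels balanced forces. -/
def needleEquilibrium (n : ℕ) (x : Fin n → ℝ) : Prop :=
  StrictMono x ∧ (∀ i : Fin n, i.val = 0 → x i = 0) ∧
    (∀ i : Fin n, i.val = n - 1 → x i = 1) ∧
    ∀ i : Fin n, 1 ≤ i.val → i.val ≤ n - 2 →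
      (∑ j ∈ Finset.univ.filter (fun j => j < i), 1 / (x i - x j) ^ 2) =
        ∑ j ∈ Finset.univ.filter (fun j => i < j), 1 / (x i - x j) ^ 2

theorem inv_combo_le (x y t s : ℝ) (hx : 0 < x) (hy : 0 < y) (ht : 0 ≤ t) (hs : 0 ≤ s)
    (hts : t + s = 1) : (t*x + s*y)⁻¹ ≤ t * x⁻¹ + s * y⁻¹ := by
  have h0 : 0 < t*x + s*y := by
    rcases ht.lt_or_eq with h | h
    · nlinarith [mul_nonneg hs hy.le]
    · nlinarith [mul_pos hy (show (0:ℝ) < s by nlinarith)]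
  rw [inv_le_iff_one_le_mul₀ h0]
  have expand : (t*x⁻¹+s*y⁻¹)*(t*x+s*y) = (t+s)^2 + t*s*((x-y)^2*(x⁻¹*y⁻¹)) := by
    field_simp; ring
  rw [expand, hts, one_pow]
  nlinarith [mul_nonneg (mul_nonneg ht hs) (mul_nonneg (sq_nonneg (x-y))
    (mul_nonneg (inv_pos.2 hx).le (inv_pos.2 hy).le))]
theorem inv_combo_lt (x y t s : ℝ) (hx : 0 < x) (hy : 0 < y) (ht : 0 < t) (hs : 0 < s)
    (hts : t + s = 1) (hxy : x ≠ y) : (t*x + s*y)⁻¹ < t * x⁻¹ + s * y⁻¹ := by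
  have h0 : 0 < t*x + s*y := by nlinarith [mul_pos ht hx, mul_pos hs hy]
  rw [inv_lt_iff_one_lt_mul₀ h0]
  have expand : (t*x⁻¹+s*y⁻¹)*(t*x+s*y) = (t+s)^2 + t*s*((x-y)^2*(x⁻¹*y⁻¹)) := by
    field_simp; ring
  rw [expand, hts, one_pow]
  have hsq : 0 < (x-y)^2 := by
    have : x - y ≠ 0 := sub_ne_zero.2 hxy
    positivity
  nlinarith [mul_pos (mul_pos ht hs) (mul_pos hsq (mul_pos (inv_pos.2 hx) (inv_pos.2 hy)))]
theorem inv_tangent (x y : ℝ) (hx : 0 < x) (hy : 0 < y) : x⁻¹ - (y - x) * (x^2)⁻¹ ≤ y⁻¹ := by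
  have h : y⁻¹ - x⁻¹ + (y - x) * (x^2)⁻¹ = (y-x)^2 * (x^2 * y)⁻¹ := by field_simp; ring
  nlinarith [mul_nonneg (sq_nonneg (y-x)) (inv_pos.2 (by positivity : (0:ℝ) < x^2*y)).le]


theorem extCfg_zero (n : ℕ) (a : Fin (n-2) → ℝ) (i : Fin n) (h : i.val = 0) :
    extCfg n a i = 0 := by simp [extCfg, h]

theorem extCfg_last (n : ℕ) (hn : 2 ≤ n) (a : Fin (n-2) → ℝ) (i : Fin n) (h : i.val = n - 1) :
    extCfg n a i = 1 := by
  have h0 : i.val ≠ 0 := by omega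
  have : n - 1 ≠ 0 := by omega
  simp [extCfg, h0, h, this]

theorem extCfg_mid (n : ℕ) (a : Fin (n-2) → ℝ) (i : Fin n) (h1 : 1 ≤ i.val)
    (h2 : i.val ≤ n - 2) :
    extCfg n a i = a ⟨i.val - 1, by have := i.isLt; omega⟩ := by
  have h0 : i.val ≠ 0 := by omega
  have hl : i.val ≠ n - 1 := by have := i.isLt; omega
  simp [extCfg, h0, hl]

theorem extCfg_succ (n : ℕ) (hn : 4 ≤ n) (a : Fin (n-2) → ℝ) (i : Fin (n-2)) :
    extCfg n a ⟨i.val + 1, by have := i.isLt; omega⟩ = a i := by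
  rw [extCfg_mid n a _ (by simp) (by have := i.isLt; show i.val + 1 ≤ n - 2; omega)]
  congr 1

theorem extCfg_affine (n : ℕ) (a b : Fin (n-2) → ℝ) (t s : ℝ) (hts : t + s = 1) (i : Fin n) :
    extCfg n (t • a + s • b) i = t * extCfg n a i + s * extCfg n b i := by
  unfold extCfg
  by_cases h0 : i.val = 0
  · simp [h0]
  · by_cases h1 : i.val = n - 1
    · have : n - 1 ≠ 0 := by omega
      simp [h0, h1, hts, this]
    · simp [h0, h1]

theorem continuous_extCfg (n : ℕ) (i : Fin n) :
    Continuous (fun a : Fin (n-2) → ℝ => extCfg n a i) := by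
  unfold extCfg
  by_cases h0 : i.val = 0
  · simp [h0]; exact continuous_const
  · by_cases h1 : i.val = n - 1
    · simp [h0, h1]; exact continuous_const
    · simp [h0, h1]; exact continuous_apply _

theorem sum_pairs_fst {n : ℕ} (f : Fin n → Fin n → ℝ) :
    ∑ p ∈ Finset.univ.filter (fun p : Fin n × Fin n => p.1 < p.2), f p.1 p.2 =
      ∑ j : Fin n, ∑ k ∈ Finset.univ.filter (fun k => j < k), f j k := by
  rw [Finset.sum_filter, Fintype.sum_prod_type]
  exact Finset.sum_congr rfl fun j _ => (Finset.sum_filter _ _).symm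

theorem sum_pairs_snd {n : ℕ} (f : Fin n → Fin n → ℝ) :
    ∑ p ∈ Finset.univ.filter (fun p : Fin n × Fin n => p.1 < p.2), f p.1 p.2 =
      ∑ k : Fin n, ∑ j ∈ Finset.univ.filter (fun j => j < k), f j k := by
  rw [Finset.sum_filter, Fintype.sum_prod_type, Finset.sum_comm]
  exact Finset.sum_congr rfl fun k _ => (Finset.sum_filter _ _).symm




theorem needle_strictMono_of_lt_succ {n : ℕ} (f : Fin n → ℝ)
    (h : ∀ i : ℕ, ∀ hi : i + 1 < n, f ⟨i, by omega⟩ < f ⟨i+1, hi⟩) : StrictMono f := by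
  intro j k hjk
  rcases j with ⟨j, hj⟩; rcases k with ⟨k, hk⟩
  rw [Fin.lt_def] at hjk
  simp only [] at hjk
  induction k with
  | zero => omega
  | succ k ih =>
    have hk1 : k + 1 < n := hk
    rcases Nat.lt_or_ge j k with h' | h'
    · exact (ih (by omega) h').trans (h k hk1)
    · have hjk' : j = k := by omega
      subst hjk'
      exact h j hk1

theorem mem_needleU_iff (n : ℕ) (a : Fin (n-2) → ℝ) :
    a ∈ needleU n ↔ ∀ i : ℕ, ∀ hi : i + 1 < n,
      extCfg n a ⟨i, by omega⟩ < extCfg n a ⟨i+1, hi⟩ := by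
  constructor
  · intro ha i hi
    exact ha (Fin.mk_lt_mk.2 (Nat.lt_succ_self i))
  · intro h
    exact needle_strictMono_of_lt_succ _ h

theorem isOpen_needleU (n : ℕ) : IsOpen (needleU n) := by
  have : needleU n = ⋂ i : Fin (n-1),
      {a | extCfg n a ⟨i.val, by have := i.isLt; omega⟩ <
        extCfg n a ⟨i.val+1, by have := i.isLt; omega⟩} := by
    ext a
    simp only [Set.mem_iInter, Set.mem_setOf_eq]
    rw [mem_needleU_iff]
    constructor
    · intro h i
      exact h i.val (by have := i.isLt; omega)
    · intro h i hi
      exact h ⟨i, by omega⟩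
  rw [this]
  exact isOpen_iInter_of_finite fun i =>
    isOpen_lt (continuous_extCfg n _) (continuous_extCfg n _)

theorem term_pos {n : ℕ} {a : Fin (n-2) → ℝ} (ha : a ∈ needleU n) {j k : Fin n} (h : j < k) :
    0 < 1 / (extCfg n a k - extCfg n a j) :=
  one_div_pos.2 (sub_pos.2 (ha h))

theorem term_le_omega {n : ℕ} {a : Fin (n-2) → ℝ} (ha : a ∈ needleU n) {j k : Fin n}
    (h : j < k) : 1 / (extCfg n a k - extCfg n a j) ≤ needleOmega n a :=
  Finset.single_le_sum (f := fun p : Fin n × Fin n =>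
      1 / (extCfg n a p.2 - extCfg n a p.1))
    (fun p hp => (term_pos ha (Finset.mem_filter.1 hp).2).le)
    (show ((j,k) : Fin n × Fin n) ∈ _ by simp [h])

theorem omega_pos {n : ℕ} (hn : 4 ≤ n) {a : Fin (n-2) → ℝ} (ha : a ∈ needleU n) :
    0 < needleOmega n a := by
  have h01 : (⟨0, by omega⟩ : Fin n) < ⟨1, by omega⟩ := by simp [Fin.lt_def]
  exact lt_of_lt_of_le (term_pos ha h01) (term_le_omega ha h01)
def needleK (n : ℕ) (ε : ℝ) : Set (Fin (n-2) → ℝ) :=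
  {a | ∀ i : ℕ, ∀ hi : i + 1 < n,
    ε ≤ extCfg n a ⟨i+1, hi⟩ - extCfg n a ⟨i, by omega⟩}

theorem needleK_subset_U (n : ℕ) {ε : ℝ} (hε : 0 < ε) : needleK n ε ⊆ needleU n := by
  intro a ha
  exact needle_strictMono_of_lt_succ _ fun i hi => by
    have := ha i hi
    linarith

theorem isClosed_needleK (n : ℕ) (ε : ℝ) : IsClosed (needleK n ε) := by
  have : needleK n ε = ⋂ i : Fin (n-1),
      {a | ε ≤ extCfg n a ⟨i.val+1, by have := i.isLt; omega⟩ -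
        extCfg n a ⟨i.val, by have := i.isLt; omega⟩} := by
    ext a
    simp only [Set.mem_iInter, Set.mem_setOf_eq]
    constructor
    · intro h i
      exact h i.val (by have := i.isLt; omega)
    · intro h i hi
      exact h ⟨i, by omega⟩
  rw [this]
  exact isClosed_iInter fun i => isClosed_le continuous_const
    ((continuous_extCfg n _).sub (continuous_extCfg n _))

theorem extCfg_mem_Icc {n : ℕ} (hn : 4 ≤ n) {a : Fin (n-2) → ℝ} (ha : a ∈ needleU n)
    (i : Fin n) : extCfg n a i ∈ Set.Icc (0:ℝ) 1 := by
  have h0 : extCfg n a ⟨0, by omega⟩ = 0 := by simp [extCfg]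
  have h1 : extCfg n a ⟨n-1, by omega⟩ = 1 := by
    have : n - 1 ≠ 0 := by omega
    simp [extCfg, this]
  constructor
  · rw [← h0]; exact ha.monotone (by simp [Fin.le_def])
  · rw [← h1]; exact ha.monotone (by simp [Fin.le_def]; omega)

theorem isCompact_needleK (n : ℕ) (hn : 4 ≤ n) {ε : ℝ} (hε : 0 < ε) :
    IsCompact (needleK n ε) := by
  refine IsCompact.of_isClosed_subset (isCompact_Icc (a := (0 : Fin (n-2) → ℝ)) (b := 1))
    (isClosed_needleK n ε) ?_
  intro a ha
  have haU := needleK_subset_U n hε ha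
  rw [Set.mem_Icc]
  have key : ∀ i : Fin (n-2), a i ∈ Set.Icc (0:ℝ) 1 := by
    intro i
    have h := extCfg_mem_Icc hn haU ⟨i.val + 1, by have := i.isLt; omega⟩
    rwa [extCfg_succ n hn a i] at h
  exact ⟨fun i => (key i).1, fun i => (key i).2⟩

theorem continuousOn_omega (n : ℕ) {s : Set (Fin (n-2) → ℝ)} (hs : s ⊆ needleU n) :
    ContinuousOn (needleOmega n) s := by
  unfold needleOmega
  refine continuousOn_finset_sum _ fun p hp => ?_
  have hlt : p.1 < p.2 := (Finset.mem_filter.1 hp).2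
  exact ContinuousOn.div continuousOn_const
    (((continuous_extCfg n p.2).sub (continuous_extCfg n p.1)).continuousOn)
    (fun a haS => (sub_pos.2 ((hs haS) hlt)).ne')

theorem mem_needleK_of_omega_le {n : ℕ} {a : Fin (n-2) → ℝ} {M : ℝ} (hM : 0 < M)
    (ha : a ∈ needleU n) (hω : needleOmega n a ≤ M) : a ∈ needleK n M⁻¹ := by
  intro i hi
  have hlt : (⟨i, by omega⟩ : Fin n) < ⟨i+1, hi⟩ := Fin.mk_lt_mk.2 (Nat.lt_succ_self i)
  have hg : 0 < extCfg n a ⟨i+1, hi⟩ - extCfg n a ⟨i, by omega⟩ := sub_pos.2 (ha hlt)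
  have h1 : 1 / (extCfg n a ⟨i+1, hi⟩ - extCfg n a ⟨i, by omega⟩) ≤ M :=
    (term_le_omega ha hlt).trans hω
  rw [div_le_iff₀ hg] at h1
  nlinarith [inv_mul_cancel₀ hM.ne', mul_le_mul_of_nonneg_left h1 (inv_pos.2 hM).le]

noncomputable def needleA0 (n : ℕ) : Fin (n-2) → ℝ := fun i => ((i.val : ℝ) + 1)/((n:ℝ)-1)

theorem extCfg_needleA0 (n : ℕ) (hn : 4 ≤ n) (i : Fin n) :
    extCfg n (needleA0 n) i = (i.val : ℝ)/((n:ℝ)-1) := by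
  have hne : ((n:ℝ)-1) ≠ 0 := by
    have : (4:ℝ) ≤ (n:ℝ) := by exact_mod_cast hn
    linarith
  by_cases h0 : i.val = 0
  · rw [extCfg_zero n _ i h0, h0]; simp
  · by_cases h1 : i.val = n - 1
    · rw [extCfg_last n (by omega) _ i h1, h1]
      rw [Nat.cast_sub (by omega), Nat.cast_one]
      field_simp
    · rw [extCfg_mid n _ i (by omega) (by have := i.isLt; omega)]
      unfold needleA0
      congr 1
      rw [Nat.cast_sub (by omega : 1 ≤ i.val)]
      ring

theorem needleA0_mem (n : ℕ) (hn : 4 ≤ n) : needleA0 n ∈ needleU n := by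
  intro j k hjk
  rw [extCfg_needleA0 n hn, extCfg_needleA0 n hn]
  have : (4:ℝ) ≤ (n:ℝ) := by exact_mod_cast hn
  have hjk' : (j.val : ℝ) < k.val := by exact_mod_cast hjk
  gcongr
  linarith

theorem exists_needle_min (n : ℕ) (hn : 4 ≤ n) :
    ∃ a ∈ needleU n, ∀ b ∈ needleU n, needleOmega n a ≤ needleOmega n b := by
  set M := needleOmega n (needleA0 n) with hMdef
  have ha0 := needleA0_mem n hn
  have hM : 0 < M := omega_pos hn ha0
  have hKU := needleK_subset_U n (inv_pos.2 hM)
  have hKc := isCompact_needleK n hn (inv_pos.2 hM)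
  have ha0K : needleA0 n ∈ needleK n M⁻¹ := mem_needleK_of_omega_le hM ha0 le_rfl
  obtain ⟨x, hxK, hxmin⟩ := hKc.exists_isMinOn ⟨_, ha0K⟩ (continuousOn_omega n hKU)
  refine ⟨x, hKU hxK, fun b hb => ?_⟩
  by_cases hbM : needleOmega n b ≤ M
  · exact hxmin (mem_needleK_of_omega_le hM hb hbM)
  · exact le_trans (hxmin ha0K) (le_of_not_ge hbM)


theorem midpoint_mem_needleU {n : ℕ} {a b : Fin (n-2) → ℝ} (ha : a ∈ needleU n)
    (hb : b ∈ needleU n) : (1/2:ℝ) • a + (1/2:ℝ) • b ∈ needleU n := by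
  intro j k hjk
  rw [extCfg_affine n a b (1/2) (1/2) (by norm_num),
    extCfg_affine n a b (1/2) (1/2) (by norm_num)]
  have h1 := ha hjk
  have h2 := hb hjk
  linarith

theorem omega_midpoint_lt {n : ℕ} (hn : 4 ≤ n) {a b : Fin (n-2) → ℝ} (ha : a ∈ needleU n)
    (hb : b ∈ needleU n) (hab : a ≠ b) :
    needleOmega n ((1/2:ℝ) • a + (1/2:ℝ) • b) <
      (needleOmega n a + needleOmega n b) / 2 := by
  obtain ⟨i, hi⟩ : ∃ i, a i ≠ b i := by
    by_contra h; push_neg at h; exact hab (funext h)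
  set c := (1/2:ℝ) • a + (1/2:ℝ) • b with hc
  have key : ∀ j k : Fin n, j < k →
      1 / (extCfg n c k - extCfg n c j) ≤
        (1/2) * (1 / (extCfg n a k - extCfg n a j)) +
          (1/2) * (1 / (extCfg n b k - extCfg n b j)) := by
    intro j k hjk
    rw [extCfg_affine n a b (1/2) (1/2) (by norm_num),
      extCfg_affine n a b (1/2) (1/2) (by norm_num)]
    have hd : 1/2 * extCfg n a k + 1/2 * extCfg n b k -
        (1/2 * extCfg n a j + 1/2 * extCfg n b j) =
        (1/2) * (extCfg n a k - extCfg n a j) + (1/2) * (extCfg n b k - extCfg n b j) := by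
      ring
    rw [hd]; simp only [one_div]
    refine inv_combo_le _ _ _ _ (sub_pos.2 (ha hjk)) (sub_pos.2 (hb hjk)) ?_ ?_ ?_ <;>
      norm_num
  have hlt0 : i.val + 1 < n := by have := i.isLt; omega
  set p0 : Fin n × Fin n := (⟨0, by omega⟩, ⟨i.val + 1, hlt0⟩) with hp0
  have hp0lt : p0.1 < p0.2 := Fin.mk_lt_mk.2 (by omega)
  have hstrict : 1 / (extCfg n c p0.2 - extCfg n c p0.1) <
      (1/2) * (1 / (extCfg n a p0.2 - extCfg n a p0.1)) +
        (1/2) * (1 / (extCfg n b p0.2 - extCfg n b p0.1)) := by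
    rw [extCfg_affine n a b (1/2) (1/2) (by norm_num),
      extCfg_affine n a b (1/2) (1/2) (by norm_num)]
    have hd : 1/2 * extCfg n a p0.2 + 1/2 * extCfg n b p0.2 -
        (1/2 * extCfg n a p0.1 + 1/2 * extCfg n b p0.1) =
        (1/2) * (extCfg n a p0.2 - extCfg n a p0.1) +
          (1/2) * (extCfg n b p0.2 - extCfg n b p0.1) := by
      ring
    rw [hd]; simp only [one_div]
    have hxy : extCfg n a p0.2 - extCfg n a p0.1 ≠ extCfg n b p0.2 - extCfg n b p0.1 := by
      have e0a : extCfg n a p0.1 = 0 := extCfg_zero n a _ rfl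
      have e0b : extCfg n b p0.1 = 0 := extCfg_zero n b _ rfl
      have e1a : extCfg n a p0.2 = a i := extCfg_succ n hn a i
      have e1b : extCfg n b p0.2 = b i := extCfg_succ n hn b i
      rw [e0a, e0b, e1a, e1b, sub_zero, sub_zero]
      exact hi
    refine inv_combo_lt _ _ _ _ (sub_pos.2 (ha hp0lt)) (sub_pos.2 (hb hp0lt))
      ?_ ?_ ?_ hxy <;> norm_num
  have hsum : needleOmega n c <
      ∑ p ∈ Finset.univ.filter (fun p : Fin n × Fin n => p.1 < p.2),
        ((1/2) * (1 / (extCfg n a p.2 - extCfg n a p.1)) +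
          (1/2) * (1 / (extCfg n b p.2 - extCfg n b p.1))) := by
    refine Finset.sum_lt_sum (fun p hp => key p.1 p.2 (Finset.mem_filter.1 hp).2)
      ⟨p0, by simp [hp0lt], hstrict⟩
  calc needleOmega n c < _ := hsum
    _ = (needleOmega n a + needleOmega n b) / 2 := by
      rw [Finset.sum_add_distrib, ← Finset.mul_sum, ← Finset.mul_sum]
      unfold needleOmega
      ring

theorem min_of_equilibrium {n : ℕ} (hn : 4 ≤ n) {a : Fin (n-2) → ℝ} (ha : a ∈ needleU n)
    (heq : needleEquilibrium n (extCfg n a)) :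
    ∀ b ∈ needleU n, needleOmega n a ≤ needleOmega n b := by
  intro b hb
  set x := extCfg n a with hx
  set y := extCfg n b with hy
  set v : Fin n → ℝ := fun i => y i - x i with hv
  set w : Fin n → Fin n → ℝ := fun j k => ((x k - x j)^2)⁻¹ with hw
  set P := Finset.univ.filter (fun p : Fin n × Fin n => p.1 < p.2) with hP
  have tangent : ∀ p ∈ P,
      1/(x p.2 - x p.1) - (v p.2 - v p.1) * w p.1 p.2 ≤ 1/(y p.2 - y p.1) := by
    intro p hp
    have hlt : p.1 < p.2 := (Finset.mem_filter.1 hp).2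
    have hxp : 0 < x p.2 - x p.1 := sub_pos.2 (ha hlt)
    have hyp : 0 < y p.2 - y p.1 := sub_pos.2 (hb hlt)
    have := inv_tangent (x p.2 - x p.1) (y p.2 - y p.1) hxp hyp
    simp only [hv, hw, one_div]
    calc (x p.2 - x p.1)⁻¹ - (y p.2 - x p.2 - (y p.1 - x p.1)) * ((x p.2 - x p.1)^2)⁻¹
        = (x p.2 - x p.1)⁻¹ - ((y p.2 - y p.1) - (x p.2 - x p.1)) * ((x p.2 - x p.1)^2)⁻¹ := by
          ring
      _ ≤ (y p.2 - y p.1)⁻¹ := this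
  -- the rearrangement: sum of (v p.2 - v p.1) * w = 0
  have hv0 : ∀ i : Fin n, i.val = 0 → v i = 0 := by
    intro i hi
    simp [hv, hx, hy, extCfg_zero n a i hi, extCfg_zero n b i hi]
  have hv1 : ∀ i : Fin n, i.val = n - 1 → v i = 0 := by
    intro i hi
    simp [hv, hx, hy, extCfg_last n (by omega) a i hi, extCfg_last n (by omega) b i hi]
  have hzero : ∑ p ∈ P, (v p.2 - v p.1) * w p.1 p.2 = 0 := by
    have hsplit : ∑ p ∈ P, (v p.2 - v p.1) * w p.1 p.2 =
        (∑ p ∈ P, v p.2 * w p.1 p.2) - ∑ p ∈ P, v p.1 * w p.1 p.2 := by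
      rw [← Finset.sum_sub_distrib]
      exact Finset.sum_congr rfl fun p _ => by ring
    have hS1 : ∑ p ∈ P, v p.2 * w p.1 p.2 =
        ∑ k : Fin n, v k * ∑ j ∈ Finset.univ.filter (fun j => j < k), w j k := by
      rw [hP, sum_pairs_snd (fun j k => v k * w j k)]
      exact Finset.sum_congr rfl fun k _ => (Finset.mul_sum _ _ _).symm
    have hS2 : ∑ p ∈ P, v p.1 * w p.1 p.2 =
        ∑ j : Fin n, v j * ∑ k ∈ Finset.univ.filter (fun k => j < k), w j k := by
      rw [hP, sum_pairs_fst (fun j k => v j * w j k)]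
      exact Finset.sum_congr rfl fun j _ => (Finset.mul_sum _ _ _).symm
    rw [hsplit, hS1, hS2, ← Finset.sum_sub_distrib]
    refine Finset.sum_eq_zero fun i _ => ?_
    by_cases h0 : i.val = 0
    · rw [hv0 i h0]; ring
    · by_cases h1 : i.val = n - 1
      · rw [hv1 i h1]; ring
      · have hA : ∑ j ∈ Finset.univ.filter (fun j => j < i), w j i =
            ∑ j ∈ Finset.univ.filter (fun j => j < i), 1 / (x i - x j) ^ 2 := by
          exact Finset.sum_congr rfl fun j _ => by simp only [hw, one_div]
        have hB : ∑ k ∈ Finset.univ.filter (fun k => i < k), w i k =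
            ∑ k ∈ Finset.univ.filter (fun k => i < k), 1 / (x i - x k) ^ 2 := by
          refine Finset.sum_congr rfl fun k _ => ?_
          simp only [hw, one_div]
          rw [show (x i - x k)^2 = (x k - x i)^2 by ring]
        rw [hA, hB, heq.2.2.2 i (by omega) (by have := i.isLt; omega)]
        ring
  have hsum := Finset.sum_le_sum tangent
  rw [Finset.sum_sub_distrib, hzero, sub_zero] at hsum
  exact hsum

theorem equilibrium_of_min {n : ℕ} (hn : 4 ≤ n) {a : Fin (n-2) → ℝ} (ha : a ∈ needleU n)
    (hmin : ∀ b ∈ needleU n, needleOmega n a ≤ needleOmega n b) :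
    needleEquilibrium n (extCfg n a) := by
  refine ⟨ha, fun i hi => extCfg_zero n a i hi, fun i hi => extCfg_last n (by omega) a i hi,
    fun i hi1 hi2 => ?_⟩
  set x := extCfg n a with hx
  set P := Finset.univ.filter (fun p : Fin n × Fin n => p.1 < p.2) with hP
  set im : Fin (n-2) := ⟨i.val - 1, by omega⟩ with him
  set e : Fin n → ℝ := fun j => if j = i then 1 else 0 with he
  set g : ℝ → (Fin (n-2) → ℝ) := fun t => a + t • (Pi.single im 1 : Fin (n-2) → ℝ) with hg
  have hext : ∀ (t : ℝ) (j : Fin n), extCfg n (g t) j = x j + e j * t := by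
    intro t j
    by_cases h0 : j.val = 0
    · have hji : j ≠ i := fun h => by rw [h] at h0; omega
      rw [extCfg_zero n _ j h0, hx, extCfg_zero n a j h0]
      simp [he, hji]
    · by_cases h1 : j.val = n - 1
      · have hji : j ≠ i := fun h => by rw [h] at h1; have := i.isLt; omega
        rw [extCfg_last n (by omega) _ j h1, hx, extCfg_last n (by omega) a j h1]
        simp [he, hji]
      · have hml : 1 ≤ j.val := by omega
        have hmr : j.val ≤ n - 2 := by have := j.isLt; omega
        rw [extCfg_mid n _ j hml hmr, hx, extCfg_mid n a j hml hmr]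
        simp only [hg, Pi.add_apply, Pi.smul_apply, smul_eq_mul]
        by_cases hji : j = i
        · subst hji
          have : (⟨j.val - 1, by have := j.isLt; omega⟩ : Fin (n-2)) = im := by
            rw [him]
          rw [this]
          simp [he]
        · have hne : (⟨j.val - 1, by have := j.isLt; omega⟩ : Fin (n-2)) ≠ im := by
            rw [him, ne_eq, Fin.mk_eq_mk]
            intro h
            exact hji (Fin.ext (by omega))
          rw [Pi.single_apply]
          simp [hne, he, hji]
  -- the curve stays in U near 0, and g 0 = a
  have hg0 : g 0 = a := by simp [hg]
  have hgc : Continuous g := by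
    apply continuous_const.add
    exact continuous_id.smul continuous_const
  have hloc : IsLocalMin (fun t => needleOmega n (g t)) 0 := by
    have hopen : IsOpen (g ⁻¹' needleU n) := (isOpen_needleU n).preimage hgc
    have h0mem : (0:ℝ) ∈ g ⁻¹' needleU n := by simp [Set.mem_preimage, hg0]; exact ha
    filter_upwards [hopen.mem_nhds h0mem] with t ht
    rw [hg0]
    exact hmin _ ht
  -- compute the derivative
  have hderiv : HasDerivAt (fun t => needleOmega n (g t))
      (∑ p ∈ P, (-(e p.2 - e p.1) / (x p.2 - x p.1) ^ 2)) 0 := by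
    have heq : (fun t => needleOmega n (g t)) =
        fun t => ∑ p ∈ P, ((x p.2 - x p.1) + (e p.2 - e p.1) * t)⁻¹ := by
      funext t
      unfold needleOmega
      rw [← hP]
      refine Finset.sum_congr rfl fun p _ => ?_
      rw [hext t p.2, hext t p.1, one_div]
      congr 1
      ring
    rw [heq]
    have := fun p (hp : p ∈ P) => (Finset.mem_filter.1 hp).2
    apply HasDerivAt.fun_sum
    intro p hp
    have hcp : 0 < x p.2 - x p.1 := sub_pos.2 (ha (this p hp))
    have hlin : HasDerivAt (fun t : ℝ => (x p.2 - x p.1) + (e p.2 - e p.1) * t)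
        (e p.2 - e p.1) 0 := by
      simpa using ((hasDerivAt_id (0:ℝ)).const_mul (e p.2 - e p.1)).const_add (x p.2 - x p.1)
    have := hlin.fun_inv (by simpa using hcp.ne')
    simpa using this
  have hD := hloc.hasDerivAt_eq_zero hderiv
  -- rearrange
  have h1 : ∑ p ∈ P, (e p.2 - e p.1) * ((x p.2 - x p.1)^2)⁻¹ = 0 := by
    have : ∑ p ∈ P, (e p.2 - e p.1) * ((x p.2 - x p.1)^2)⁻¹ =
        - ∑ p ∈ P, (-(e p.2 - e p.1) / (x p.2 - x p.1) ^ 2) := by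
      rw [← Finset.sum_neg_distrib]
      refine Finset.sum_congr rfl fun p _ => ?_
      rw [div_eq_mul_inv]
      ring
    rw [this, hD, neg_zero]
  set w : Fin n → Fin n → ℝ := fun j k => ((x k - x j)^2)⁻¹ with hw
  have hsplit : ∑ p ∈ P, (e p.2 - e p.1) * w p.1 p.2 =
      (∑ p ∈ P, e p.2 * w p.1 p.2) - ∑ p ∈ P, e p.1 * w p.1 p.2 := by
    rw [← Finset.sum_sub_distrib]
    exact Finset.sum_congr rfl fun p _ => by ring
  have hS1 : ∑ p ∈ P, e p.2 * w p.1 p.2 =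
      ∑ j ∈ Finset.univ.filter (fun j => j < i), w j i := by
    rw [hP, sum_pairs_snd (fun j k => e k * w j k)]
    rw [Finset.sum_eq_single i (fun k _ hk => by simp [he, hk]) (by simp)]
    exact Finset.sum_congr rfl fun j _ => by simp [he]
  have hS2 : ∑ p ∈ P, e p.1 * w p.1 p.2 =
      ∑ k ∈ Finset.univ.filter (fun k => i < k), w i k := by
    rw [hP, sum_pairs_fst (fun j k => e j * w j k)]
    rw [Finset.sum_eq_single i (fun j _ hj => by simp [he, hj]) (by simp)]
    exact Finset.sum_congr rfl fun k _ => by simp [he]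
  have hAB : ∑ j ∈ Finset.univ.filter (fun j => j < i), w j i =
      ∑ k ∈ Finset.univ.filter (fun k => i < k), w i k := by
    have := h1
    rw [hsplit, hS1, hS2] at this
    linarith
  calc ∑ j ∈ Finset.univ.filter (fun j => j < i), 1 / (x i - x j) ^ 2
      = ∑ j ∈ Finset.univ.filter (fun j => j < i), w j i :=
        Finset.sum_congr rfl fun j _ => by simp [hw, one_div]
    _ = ∑ k ∈ Finset.univ.filter (fun k => i < k), w i k := hAB
    _ = ∑ j ∈ Finset.univ.filter (fun j => i < j), 1 / (x i - x j) ^ 2 := by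
        refine Finset.sum_congr rfl fun k _ => ?_
        simp only [hw, one_div]
        rw [show (x i - x k)^2 = (x k - x i)^2 by ring]

/-- The configuration of `n` charges at equilibrium on the needle `[0,1]` is the unique
minimizer of `ω`: a point `a ∈ U_{n-2}` minimizes `ω` over `U_{n-2}` if and only if the
extended configuration `(0, a_2, …, a_{n-1}, 1)` is an equilibrium configuration, and
there is exactly one such point. -/
theorem needleOmega_min_iff_equilibrium (n : ℕ) (hn : 4 ≤ n) :
    (∀ a ∈ needleU n,
        ((∀ b ∈ needleU n, needleOmega n a ≤ needleOmega n b) ↔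
          needleEquilibrium n (extCfg n a))) ∧
      ∃! a : Fin (n - 2) → ℝ,
        a ∈ needleU n ∧ ∀ b ∈ needleU n, needleOmega n a ≤ needleOmega n b := by
  constructor
  · intro a ha
    exact ⟨fun hmin => equilibrium_of_min hn ha hmin,
      fun heq => min_of_equilibrium hn ha heq⟩
  · obtain ⟨a, haU, hamin⟩ := exists_needle_min n hn
    refine ⟨a, ⟨haU, hamin⟩, ?_⟩
    rintro b ⟨hbU, hbmin⟩
    by_contra hne
    have hmid := omega_midpoint_lt hn hbU haU hne
    have h1 : needleOmega n b ≤ needleOmega n ((1/2:ℝ) • b + (1/2:ℝ) • a) :=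
      hbmin _ (midpoint_mem_needleU hbU haU)
    have h2 : needleOmega n a = needleOmega n b :=
      le_antisymm (hamin b hbU) (hbmin a haU)
    linarith
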